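/- Let K be a positive semidefinite bounded linear operator on H and let (F,G) be an (N,n) K-dual pair. Then max_{1≤i≤N} |⟨f_i, g_i⟩| ≥ tr(K)/N, and equality max_{1≤i≤N} |⟨f_i, g_i⟩| = tr(K)/N holds if and only if ⟨f_i, g_i⟩ = tr(K)/N for every i ∈ {1,…,N}. -/

import Mathlib

open scoped ComplexOrder

local notation "⟪" x ", " y "⟫" => @inner ℂ _ _ x y

/-- If `K` is positive semidefinite and `(F, G)` is an `(N, n)` `K`-dual pair,
then `max_i |⟨f_i, g_i⟩| ≥ tr(K)/N`, with equality iff `⟨f_i, g_i⟩ = tr(K)/N` for every `i`.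
(The paper's `⟨f, g⟩` is linear in the first slot, so `⟨f_i, g_i⟩` is Mathlib's `⟪g_i, f_i⟫`.) -/
theorem stmt4
    {H : Type*} [NormedAddCommGroup H] [InnerProductSpace ℂ H] [FiniteDimensional ℂ H]
    (hdim : 1 ≤ Module.finrank ℂ H)
    {N : ℕ} (hN : 1 ≤ N)
    (K : H →L[ℂ] H) (hK : ∀ f : H, 0 ≤ ⟪K f, f⟫)
    (F G : Fin N → H)
    (hdual : ∀ f : H, K f = ∑ i, ⟪G i, f⟫ • F i) :
    (LinearMap.trace ℂ H (K : H →ₗ[ℂ] H)).re / N ≤ ⨆ i, ‖⟪G i, F i⟫‖ ∧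
    ((⨆ i, ‖⟪G i, F i⟫‖) = (LinearMap.trace ℂ H (K : H →ₗ[ℂ] H)).re / N ↔
      ∀ i, ⟪G i, F i⟫ = LinearMap.trace ℂ H (K : H →ₗ[ℂ] H) / N) := by
  classical
  have hNe : Nonempty (Fin N) := ⟨⟨0, hN⟩⟩
  set T := LinearMap.trace ℂ H (K : H →ₗ[ℂ] H) with hT
  set b := stdOrthonormalBasis ℂ H
  -- trace formula
  have hdiag : ∀ j, (LinearMap.toMatrix b.toBasis b.toBasis (K : H →ₗ[ℂ] H)).diag j
      = ⟪b j, K (b j)⟫ := by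
    intro j
    rw [Matrix.diag, LinearMap.toMatrix_apply]
    simp [OrthonormalBasis.coe_toBasis_repr_apply, b.repr_apply_apply]
  have htr0 : T = ∑ j, ⟪b j, K (b j)⟫ := by
    rw [hT, LinearMap.trace_eq_matrix_trace ℂ b.toBasis, Matrix.trace]
    exact Finset.sum_congr rfl fun j _ => hdiag j
  have htr : T = ∑ i, ⟪G i, F i⟫ := by
    rw [htr0]
    have h2 : ∀ j, ⟪b j, K (b j)⟫ = ∑ i, ⟪G i, b j⟫ * ⟪b j, F i⟫ := by
      intro j
      rw [hdual (b j), inner_sum]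
      simp [inner_smul_right, mul_comm]
    rw [Finset.sum_congr rfl fun j _ => h2 j, Finset.sum_comm]
    exact Finset.sum_congr rfl fun i _ => b.sum_inner_mul_inner _ _
  -- positivity of trace
  have hTpos : 0 ≤ T := by
    rw [htr0]
    refine Finset.sum_nonneg fun j _ => ?_
    have h := hK (b j)
    have heq : ⟪b j, K (b j)⟫ = ⟪K (b j), b j⟫ := by
      rw [← inner_conj_symm]
      exact Complex.conj_eq_iff_im.mpr (Complex.nonneg_iff.mp h).2.symm
    rw [heq]; exact h
  have hTim : T.im = 0 := (Complex.nonneg_iff.mp hTpos).2.symm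
  have hTre : T = (T.re : ℂ) := (Complex.ext (by simp) (by simp [hTim])).symm
  have hTre0 : 0 ≤ T.re := (Complex.nonneg_iff.mp hTpos).1
  set z : Fin N → ℂ := fun i => ⟪G i, F i⟫ with hz
  set s := ⨆ i, ‖z i‖ with hs
  have hbdd : BddAbove (Set.range fun i => ‖z i‖) :=
    (Set.finite_range _).bddAbove
  have hle : ∀ i, ‖z i‖ ≤ s := fun i => le_ciSup hbdd i
  have hNpos : (0:ℝ) < N := by exact_mod_cast hN
  have hNC : (N : ℂ) ≠ 0 := Nat.cast_ne_zero.mpr (by omega)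
  set t := T.re / N with ht
  have htN : t * N = T.re := by rw [ht]; field_simp
  have hTN : T = ((t : ℝ) : ℂ) * N := by rw [hTre, ← htN]; push_cast; ring
  have hTdiv : T / N = ((t : ℝ) : ℂ) := by rw [hTN, mul_div_cancel_right₀ _ hNC]
  have ht0 : 0 ≤ t := div_nonneg hTre0 hNpos.le
  have hsum_re : T.re = ∑ i, (z i).re := by rw [htr]; exact Complex.re_sum _ _
  have key : T.re ≤ N * s := by
    rw [hsum_re]
    calc ∑ i, (z i).re ≤ ∑ i, ‖z i‖ :=
          Finset.sum_le_sum fun i _ => Complex.re_le_norm _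
      _ ≤ ∑ _i : Fin N, s := Finset.sum_le_sum fun i _ => hle i
      _ = N * s := by simp [mul_comm]
  have part1 : t ≤ s := by rw [ht, div_le_iff₀ hNpos]; linarith [key]
  refine ⟨part1, ?_, ?_⟩
  · -- equality → all equal
    intro hEq i
    have hlt : ∀ j, ‖z j‖ ≤ t := fun j => hEq ▸ hle j
    have hre_le : ∀ j, (z j).re ≤ t := fun j => (Complex.re_le_norm _).trans (hlt j)
    have hsum : ∑ j, (z j).re = N * t := by rw [← hsum_re, ← htN]; ring
    have hre_eq : ∀ j, (z j).re = t := by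
      by_contra hcon
      push_neg at hcon
      obtain ⟨j₀, hj₀⟩ := hcon
      have hj₀' : (z j₀).re < t := lt_of_le_of_ne (hre_le j₀) hj₀
      have : ∑ j, (z j).re < ∑ _j : Fin N, t :=
        Finset.sum_lt_sum (fun j _ => hre_le j) ⟨j₀, Finset.mem_univ _, hj₀'⟩
      simp only [Finset.sum_const, Finset.card_univ, Fintype.card_fin, nsmul_eq_mul] at this
      rw [hsum] at this
      exact absurd this (by rw [mul_comm]; exact lt_irrefl _)
    have habs : ‖z i‖ = t :=
      le_antisymm (hlt i) ((hre_eq i) ▸ Complex.re_le_norm _)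
    have him : (z i).im = 0 := by
      have h3 := Complex.sq_norm (z i)
      rw [habs, Complex.normSq_apply, hre_eq i] at h3
      have : (z i).im * (z i).im = 0 := by nlinarith
      exact mul_self_eq_zero.mp this
    have hzi : z i = ((t : ℝ) : ℂ) := Complex.ext (by simp [hre_eq i]) (by simp [him])
    show z i = T / ↑N
    rw [hzi, hTdiv]
  · -- all equal → equality
    intro hAll
    have habs' : ∀ i, ‖z i‖ = t := by
      intro i
      have h : z i = ((t : ℝ) : ℂ) := by
        show ⟪G i, F i⟫ = _
        rw [hAll i, hTdiv]
      rw [h, Complex.norm_of_nonneg ht0]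
    rw [hs]
    simp only [habs']
    exact ciSup_const
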